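/- arXiv:1408.2393 — 2 statements merged into one kernel-verified Lean document; each statement's English description precedes it below -/
import Mathlib

section
/- Let P be a countable partial order which is IH-homogeneous (every finite partial isomorphism of P extends to a <-preserving map P → P) and which satisfies the incomparable point property: for every finite subset A of P there is z ∈ P with z ∥ a for all a ∈ A. Then P is HE-homogeneous (every <-preserving map between finite subsets of P extends to a surjective <-preserving map P → P) and MB-homogeneous (every injective <-preserving map between finite subsets of P extends to a bijective <-preserving map P → P). -/
/-- `x` and `y` are incomparable in a poset. -/
def Incomp {P : Type*} [PartialOrder P] (x y : P) : Prop := ¬ x ≤ y ∧ ¬ y ≤ x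

/-- A finite partial isomorphism of a poset `P`. -/
def IsFinPartIso {P : Type*} [PartialOrder P] (A : Finset P) (f : P → P) : Prop :=
  ∀ a₁ ∈ A, ∀ a₂ ∈ A, (a₁ ≤ a₂ ↔ f a₁ ≤ f a₂)

/-- `P` is IH-homogeneous: every finite partial isomorphism extends to a
`<`-preserving map `P → P`. -/
def IHHomogeneous (P : Type*) [PartialOrder P] : Prop :=
  ∀ (A : Finset P) (f : P → P), IsFinPartIso A f →
    ∃ g : P → P, StrictMono g ∧ ∀ a ∈ A, g a = f a

/-- `P` is HE-homogeneous: every `<`-preserving map between finite subsets extends to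
a surjective `<`-preserving map `P → P`. -/
def HEHomogeneous (P : Type*) [PartialOrder P] : Prop :=
  ∀ (A : Finset P) (f : P → P), (∀ a₁ ∈ A, ∀ a₂ ∈ A, a₁ < a₂ → f a₁ < f a₂) →
    ∃ g : P → P, StrictMono g ∧ Function.Surjective g ∧ ∀ a ∈ A, g a = f a

/-- `P` is MB-homogeneous: every injective `<`-preserving map between finite subsets
extends to a bijective `<`-preserving map `P → P`. -/
def MBHomogeneous (P : Type*) [PartialOrder P] : Prop :=
  ∀ (A : Finset P) (f : P → P), Set.InjOn f ↑A →
    (∀ a₁ ∈ A, ∀ a₂ ∈ A, a₁ < a₂ → f a₁ < f a₂) →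
    ∃ g : P → P, StrictMono g ∧ Function.Bijective g ∧ ∀ a ∈ A, g a = f a

section Aux
variable {P : Type*} [PartialOrder P]

private lemma exists_max_ge (B : Finset P) {b : P} (hb : b ∈ B) :
    ∃ m ∈ B, b ≤ m ∧ ∀ c ∈ B, ¬ m < c := by
  obtain ⟨m, hm, hmax⟩ := Set.Finite.exists_maximalFor id {x ∈ (B : Set P) | b ≤ x}
    (B.finite_toSet.subset (fun x hx => hx.1)) ⟨b, hb, le_refl b⟩
  refine ⟨m, hm.1, hm.2, fun c hc hlt => ?_⟩
  have := hmax (j := c) ⟨hc, hm.2.trans hlt.le⟩ hlt.le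
  exact lt_irrefl m (hlt.trans_le this)

private lemma exists_min_le (B : Finset P) {b : P} (hb : b ∈ B) :
    ∃ m ∈ B, m ≤ b ∧ ∀ c ∈ B, ¬ c < m := by
  obtain ⟨m, hm, hmax⟩ := Set.Finite.exists_minimalFor id {x ∈ (B : Set P) | x ≤ b}
    (B.finite_toSet.subset (fun x hx => hx.1)) ⟨b, hb, le_refl b⟩
  refine ⟨m, hm.1, hm.2, fun c hc hlt => ?_⟩
  have := hmax (j := c) ⟨hc, hlt.le.trans hm.2⟩ hlt.le
  exact lt_irrefl c (hlt.trans_le this)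

private lemma exists_seq_anti {Pr : P → Prop} {p : P} (h0 : Pr p)
    (hstep : ∀ r, Pr r → ∃ r', Pr r' ∧ r' < r) :
    ∃ s : ℕ → P, StrictAnti s ∧ ∀ n, Pr (s n) := by
  choose nxt hPr hlt using hstep
  let next : {r // Pr r} → {r // Pr r} := fun r => ⟨nxt r.1 r.2, hPr r.1 r.2⟩
  let t : ℕ → {r // Pr r} := fun n => next^[n] ⟨p, h0⟩
  refine ⟨fun n => (t n).1, strictAnti_nat_of_succ_lt (fun n => ?_), fun n => (t n).2⟩
  have h : t (n + 1) = next (t n) := Function.iterate_succ_apply' next n ⟨p, h0⟩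
  simpa only [h] using hlt (t n).1 (t n).2

private lemma exists_seq_mono {Pr : P → Prop} {p : P} (h0 : Pr p)
    (hstep : ∀ r, Pr r → ∃ r', Pr r' ∧ r < r') :
    ∃ s : ℕ → P, StrictMono s ∧ ∀ n, Pr (s n) := by
  choose nxt hPr hlt using hstep
  let next : {r // Pr r} → {r // Pr r} := fun r => ⟨nxt r.1 r.2, hPr r.1 r.2⟩
  let t : ℕ → {r // Pr r} := fun n => next^[n] ⟨p, h0⟩
  refine ⟨fun n => (t n).1, strictMono_nat_of_lt_succ (fun n => ?_), fun n => (t n).2⟩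
  have h : t (n + 1) = next (t n) := Function.iterate_succ_apply' next n ⟨p, h0⟩
  simpa only [h] using hlt (t n).1 (t n).2

set_option linter.unusedSectionVars false in
private lemma inj_escape {h : ℕ → P} (hinj : Function.Injective h) (F : Finset P) :
    ∃ n, h n ∉ F := by
  by_contra hc
  push_neg at hc
  have hcard := Finset.card_le_card_of_injOn h
    (fun n (_ : n ∈ Finset.range (F.card + 1)) => hc n) hinj.injOn
  simp only [Finset.card_range] at hcard
  omega

private lemma forth (hIH : IHHomogeneous P)
    (hIPP : ∀ A : Finset P, ∃ z : P, ∀ a ∈ A, Incomp z a)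
    (A : Finset P) (f : P → P)
    (hf : ∀ a₁ ∈ A, ∀ a₂ ∈ A, a₁ < a₂ → f a₁ < f a₂)
    (p : P) (F : Finset P) :
    ∃ v, v ∉ F ∧ (∀ a ∈ A, a < p → f a < v) ∧ (∀ a ∈ A, p < a → v < f a) := by
  classical
  set AL := A.filter (fun a => a < p) with hALdef
  set AU := A.filter (fun a => p < a) with hAUdef
  set BL := AL.image f with hBLdef
  set BU := AU.image f with hBUdef
  set maxBL := BL.filter (fun b => ∀ c ∈ BL, ¬ b < c) with hmaxdef
  set minBU := BU.filter (fun b => ∀ c ∈ BU, ¬ c < b) with hmindef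
  set ξ : P → P := fun b => if h : ∃ x, x ∈ AL ∧ f x = b then h.choose else p with hξdef
  set υ : P → P := fun b => if h : ∃ y, y ∈ AU ∧ f y = b then h.choose else p with hυdef
  set X := maxBL.image ξ with hXdef
  set Y := minBU.image υ with hYdef
  -- basic facts about ξ, υ
  have hξ : ∀ b ∈ BL, ξ b ∈ AL ∧ f (ξ b) = b := by
    intro b hb
    obtain ⟨x, hx, hfx⟩ := Finset.mem_image.1 hb
    have hex : ∃ x, x ∈ AL ∧ f x = b := ⟨x, hx, hfx⟩
    simp only [hξdef, dif_pos hex]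
    exact hex.choose_spec
  have hυ : ∀ b ∈ BU, υ b ∈ AU ∧ f (υ b) = b := by
    intro b hb
    obtain ⟨y, hy, hfy⟩ := Finset.mem_image.1 hb
    have hex : ∃ y, y ∈ AU ∧ f y = b := ⟨y, hy, hfy⟩
    simp only [hυdef, dif_pos hex]
    exact hex.choose_spec
  have hmaxsubBL : maxBL ⊆ BL := Finset.filter_subset _ _
  have hminsubBU : minBU ⊆ BU := Finset.filter_subset _ _
  have hXspec : ∀ x ∈ X, x ∈ AL ∧ f x ∈ maxBL ∧ ξ (f x) = x := by
    intro x hx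
    obtain ⟨b, hb, rfl⟩ := Finset.mem_image.1 hx
    obtain ⟨h1, h2⟩ := hξ b (hmaxsubBL hb)
    exact ⟨h1, by rw [h2]; exact hb, by rw [h2]⟩
  have hYspec : ∀ y ∈ Y, y ∈ AU ∧ f y ∈ minBU ∧ υ (f y) = y := by
    intro y hy
    obtain ⟨b, hb, rfl⟩ := Finset.mem_image.1 hy
    obtain ⟨h1, h2⟩ := hυ b (hminsubBU hb)
    exact ⟨h1, by rw [h2]; exact hb, by rw [h2]⟩
  have hXA : ∀ x ∈ X, x ∈ A := fun x hx => (Finset.mem_filter.1 (hXspec x hx).1).1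
  have hYA : ∀ y ∈ Y, y ∈ A := fun y hy => (Finset.mem_filter.1 (hYspec y hy).1).1
  have hXlt : ∀ x ∈ X, x < p := fun x hx => (Finset.mem_filter.1 (hXspec x hx).1).2
  have hYgt : ∀ y ∈ Y, p < y := fun y hy => (Finset.mem_filter.1 (hYspec y hy).1).2
  have hXinj : ∀ x₁ ∈ X, ∀ x₂ ∈ X, f x₁ = f x₂ → x₁ = x₂ := by
    intro x₁ h₁ x₂ h₂ h
    rw [← (hXspec x₁ h₁).2.2, ← (hXspec x₂ h₂).2.2, h]
  have hYinj : ∀ y₁ ∈ Y, ∀ y₂ ∈ Y, f y₁ = f y₂ → y₁ = y₂ := by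
    intro y₁ h₁ y₂ h₂ h
    rw [← (hYspec y₁ h₁).2.2, ← (hYspec y₂ h₂).2.2, h]
  have hXmax : ∀ x ∈ X, ∀ c ∈ BL, ¬ f x < c :=
    fun x hx => (Finset.mem_filter.1 (hXspec x hx).2.1).2
  have hYmin : ∀ y ∈ Y, ∀ c ∈ BU, ¬ c < f y :=
    fun y hy => (Finset.mem_filter.1 (hYspec y hy).2.1).2
  have hXanti : ∀ x₁ ∈ X, ∀ x₂ ∈ X, x₁ ≤ x₂ → x₁ = x₂ := by
    intro x₁ h₁ x₂ h₂ h
    rcases h.lt_or_eq with h | h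
    · exact absurd (hf x₁ (hXA x₁ h₁) x₂ (hXA x₂ h₂) h)
        (hXmax x₁ h₁ (f x₂) (Finset.mem_image_of_mem f (hXspec x₂ h₂).1))
    · exact h
  have hYanti : ∀ y₁ ∈ Y, ∀ y₂ ∈ Y, y₁ ≤ y₂ → y₁ = y₂ := by
    intro y₁ h₁ y₂ h₂ h
    rcases h.lt_or_eq with h | h
    · exact absurd (hf y₁ (hYA y₁ h₁) y₂ (hYA y₂ h₂) h)
        (hYmin y₂ h₂ (f y₁) (Finset.mem_image_of_mem f (hYspec y₁ h₁).1))
    · exact h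
  have hfXanti : ∀ x₁ ∈ X, ∀ x₂ ∈ X, f x₁ ≤ f x₂ → x₁ = x₂ := by
    intro x₁ h₁ x₂ h₂ h
    rcases h.lt_or_eq with h | h
    · exact absurd h (hXmax x₁ h₁ (f x₂) (Finset.mem_image_of_mem f (hXspec x₂ h₂).1))
    · exact hXinj x₁ h₁ x₂ h₂ h
  have hfYanti : ∀ y₁ ∈ Y, ∀ y₂ ∈ Y, f y₁ ≤ f y₂ → y₁ = y₂ := by
    intro y₁ h₁ y₂ h₂ h
    rcases h.lt_or_eq with h | h
    · exact absurd h (hYmin y₂ h₂ (f y₁) (Finset.mem_image_of_mem f (hYspec y₁ h₁).1))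
    · exact hYinj y₁ h₁ y₂ h₂ h
  have hcoverL : ∀ a ∈ A, a < p → ∃ x ∈ X, f a ≤ f x := by
    intro a ha hap
    have hfa : f a ∈ BL := Finset.mem_image_of_mem f (Finset.mem_filter.2 ⟨ha, hap⟩)
    obtain ⟨m, hm, hle, hmax⟩ := exists_max_ge BL hfa
    have hmmax : m ∈ maxBL := Finset.mem_filter.2 ⟨hm, hmax⟩
    refine ⟨ξ m, Finset.mem_image_of_mem ξ hmmax, ?_⟩
    rw [(hξ m hm).2]
    exact hle
  have hcoverU : ∀ a ∈ A, p < a → ∃ y ∈ Y, f y ≤ f a := by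
    intro a ha hpa
    have hfa : f a ∈ BU := Finset.mem_image_of_mem f (Finset.mem_filter.2 ⟨ha, hpa⟩)
    obtain ⟨m, hm, hle, hmin⟩ := exists_min_le BU hfa
    have hmmin : m ∈ minBU := Finset.mem_filter.2 ⟨hm, hmin⟩
    refine ⟨υ m, Finset.mem_image_of_mem υ hmmin, ?_⟩
    rw [(hυ m hm).2]
    exact hle
  have hiso : IsFinPartIso (X ∪ Y) f := by
    intro a₁ h₁ a₂ h₂
    rcases Finset.mem_union.1 h₁ with h₁ | h₁ <;> rcases Finset.mem_union.1 h₂ with h₂ | h₂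
    · constructor
      · intro h; exact le_of_eq (congrArg f (hXanti a₁ h₁ a₂ h₂ h))
      · intro h; exact le_of_eq (hfXanti a₁ h₁ a₂ h₂ h)
    · exact iff_of_true ((hXlt a₁ h₁).trans (hYgt a₂ h₂)).le
        (hf a₁ (hXA a₁ h₁) a₂ (hYA a₂ h₂) ((hXlt a₁ h₁).trans (hYgt a₂ h₂))).le
    · refine iff_of_false (fun h => ?_) (fun h => ?_)
      · exact absurd ((hYgt a₁ h₁).trans (lt_of_le_of_lt h (hXlt a₂ h₂))) (lt_irrefl p)
      · exact absurd (lt_of_le_of_lt h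
          (hf a₂ (hXA a₂ h₂) a₁ (hYA a₁ h₁) ((hXlt a₂ h₂).trans (hYgt a₁ h₁))))
          (lt_irrefl (f a₁))
    · constructor
      · intro h; exact le_of_eq (congrArg f (hYanti a₁ h₁ a₂ h₂ h))
      · intro h; exact le_of_eq (hfYanti a₁ h₁ a₂ h₂ h)
  by_cases hU : AU.Nonempty
  · -- Y is nonempty; build a decreasing chain of midpoints below p
    obtain ⟨a₀, ha₀⟩ := hU
    obtain ⟨m₀, hm₀, _, hmin₀⟩ := exists_min_le BU (Finset.mem_image_of_mem f ha₀)
    have hy₀ : υ m₀ ∈ Y :=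
      Finset.mem_image_of_mem υ (Finset.mem_filter.2 ⟨hm₀, hmin₀⟩)
    set y₀ := υ m₀ with hy₀def
    have hstepseq : ∀ r, ((∀ x ∈ X, x < r) ∧ r ≤ p) →
        ∃ r', ((∀ x ∈ X, x < r') ∧ r' ≤ p) ∧ r' < r := by
      intro r hr
      set φ : P → P := fun z => if z = y₀ then r else z with hφdef
      have hy₀X : y₀ ∉ X := fun h => absurd ((hXlt y₀ h).trans (hYgt y₀ hy₀)) (lt_irrefl y₀)
      have hφX : ∀ x ∈ X, φ x = x := by
        intro x hx
        simp only [hφdef]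
        exact if_neg (fun (h : x = y₀) => hy₀X (h ▸ hx))
      have hφy : φ y₀ = r := by simp [hφdef]
      have hiso2 : IsFinPartIso (insert y₀ X) φ := by
        intro a₁ h₁ a₂ h₂
        rcases Finset.mem_insert.1 h₁ with rfl | h₁
        · rcases Finset.mem_insert.1 h₂ with rfl | h₂
          · exact iff_of_true (le_refl _) (le_refl _)
          · refine iff_of_false (fun h => ?_) (fun h => ?_)
            · exact absurd ((hYgt y₀ hy₀).trans (lt_of_le_of_lt h (hXlt a₂ h₂)))
                (lt_irrefl p)
            · rw [hφy, hφX a₂ h₂] at h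
              exact absurd (lt_of_le_of_lt h (hr.1 a₂ h₂)) (lt_irrefl r)
        · rcases Finset.mem_insert.1 h₂ with rfl | h₂
          · refine iff_of_true ((hXlt a₁ h₁).trans (hYgt y₀ hy₀)).le ?_
            rw [hφy, hφX a₁ h₁]
            exact (hr.1 a₁ h₁).le
          · rw [hφX a₁ h₁, hφX a₂ h₂]
      obtain ⟨g, hgm, hge⟩ := hIH (insert y₀ X) φ hiso2
      have hgr : g p < r := by
        have h1 : g y₀ = r := (hge y₀ (Finset.mem_insert_self _ _)).trans hφy
        rw [← h1]
        exact hgm (hYgt y₀ hy₀)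
      refine ⟨g p, ⟨?_, hgr.le.trans hr.2⟩, hgr⟩
      intro x hx
      have h1 : g x = x := (hge x (Finset.mem_insert_of_mem hx)).trans (hφX x hx)
      rw [← h1]
      exact hgm (hXlt x hx)
    obtain ⟨s, hanti, hPr⟩ := exists_seq_anti ⟨fun x hx => hXlt x hx, le_refl p⟩ hstepseq
    obtain ⟨g, hgm, hge⟩ := hIH (X ∪ Y) f hiso
    obtain ⟨n, hn⟩ := inj_escape (hgm.comp_strictAnti hanti).injective F
    refine ⟨g (s n), hn, ?_, ?_⟩
    · intro a ha hap
      obtain ⟨x, hx, hax⟩ := hcoverL a ha hap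
      have h1 : g x = f x := hge x (Finset.mem_union_left _ hx)
      exact lt_of_le_of_lt (hax.trans h1.symm.le) (hgm ((hPr n).1 x hx))
    · intro a ha hpa
      obtain ⟨y, hy, hya⟩ := hcoverU a ha hpa
      have h1 : g y = f y := hge y (Finset.mem_union_right _ hy)
      exact lt_of_lt_of_le (hgm (lt_of_le_of_lt (hPr n).2 (hYgt y hy)))
        (h1.le.trans hya)
  · by_cases hLn : AL.Nonempty
    · -- X is nonempty; build an increasing chain above p
      obtain ⟨a₀, ha₀⟩ := hLn
      obtain ⟨m₀, hm₀, _, hmax₀⟩ := exists_max_ge BL (Finset.mem_image_of_mem f ha₀)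
      have hx₀ : ξ m₀ ∈ X :=
        Finset.mem_image_of_mem ξ (Finset.mem_filter.2 ⟨hm₀, hmax₀⟩)
      set x₀ := ξ m₀ with hx₀def
      have hstepseq : ∀ r, p ≤ r → ∃ r', p ≤ r' ∧ r < r' := by
        intro r hr
        set φ : P → P := fun z => if z = x₀ then r else z with hφdef
        have hiso2 : IsFinPartIso {x₀} φ := by
          intro a₁ h₁ a₂ h₂
          rw [Finset.mem_singleton.1 h₁, Finset.mem_singleton.1 h₂]
          exact iff_of_true (le_refl _) (le_refl _)
        obtain ⟨g, hgm, hge⟩ := hIH {x₀} φ hiso2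
        have hgr : r < g p := by
          have hφx : φ x₀ = r := by simp [hφdef]
          have h1 : g x₀ = r := (hge x₀ (Finset.mem_singleton_self _)).trans hφx
          rw [← h1]
          exact hgm (hXlt x₀ hx₀)
        exact ⟨g p, hr.trans hgr.le, hgr⟩
      obtain ⟨s, hmono', hPr⟩ := exists_seq_mono (le_refl p) hstepseq
      obtain ⟨g, hgm, hge⟩ := hIH (X ∪ Y) f hiso
      obtain ⟨n, hn⟩ := inj_escape (hgm.comp hmono').injective F
      refine ⟨g (s n), hn, ?_, ?_⟩
      · intro a ha hap
        obtain ⟨x, hx, hax⟩ := hcoverL a ha hap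
        have h1 : g x = f x := hge x (Finset.mem_union_left _ hx)
        exact lt_of_le_of_lt (hax.trans h1.symm.le)
          (hgm (lt_of_lt_of_le (hXlt x hx) (hPr n)))
      · intro a ha hpa
        exact absurd ⟨a, Finset.mem_filter.2 ⟨ha, hpa⟩⟩ hU
    · -- no points of A comparable with p: any point incomparable with F works
      obtain ⟨z, hz⟩ := hIPP F
      refine ⟨z, fun hzF => (hz z hzF).1 (le_refl z), ?_, ?_⟩
      · intro a ha hap
        exact absurd ⟨a, Finset.mem_filter.2 ⟨ha, hap⟩⟩ hLn
      · intro a ha hpa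
        exact absurd ⟨a, Finset.mem_filter.2 ⟨ha, hpa⟩⟩ hU

private lemma step_HE (hIH : IHHomogeneous P)
    (hIPP : ∀ A : Finset P, ∃ z : P, ∀ a ∈ A, Incomp z a)
    (A : Finset P) (f : P → P)
    (hf : ∀ a₁ ∈ A, ∀ a₂ ∈ A, a₁ < a₂ → f a₁ < f a₂) (t : P) :
    ∃ (A' : Finset P) (f' : P → P), (∀ a₁ ∈ A', ∀ a₂ ∈ A', a₁ < a₂ → f' a₁ < f' a₂) ∧
      A ⊆ A' ∧ (∀ a ∈ A, f' a = f a) ∧ t ∈ A' ∧ ∃ b ∈ A', f' b = t := by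
  classical
  obtain ⟨A₁, f₁, h₁strict, h₁sub, h₁agree, h₁mem⟩ :
      ∃ (A₁ : Finset P) (f₁ : P → P), (∀ a₁ ∈ A₁, ∀ a₂ ∈ A₁, a₁ < a₂ → f₁ a₁ < f₁ a₂) ∧
        A ⊆ A₁ ∧ (∀ a ∈ A, f₁ a = f a) ∧ t ∈ A₁ := by
    by_cases ht : t ∈ A
    · exact ⟨A, f, hf, subset_rfl, fun a _ => rfl, ht⟩
    · obtain ⟨v, _, hvL, hvU⟩ := forth hIH hIPP A f hf t ∅
      have key : ∀ a ∈ insert t A, a ≠ t → a ∈ A :=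
        fun a ha hne => (Finset.mem_insert.1 ha).resolve_left hne
      refine ⟨insert t A, Function.update f t v, ?_, Finset.subset_insert _ _,
        fun a ha => Function.update_of_ne (ne_of_mem_of_not_mem ha ht) _ _,
        Finset.mem_insert_self _ _⟩
      intro a₁ ha₁ a₂ ha₂ hlt
      rw [Function.update_apply, Function.update_apply]
      by_cases h1 : a₁ = t
      · by_cases h2 : a₂ = t
        · rw [h1, h2] at hlt
          exact absurd hlt (lt_irrefl t)
        · rw [if_pos h1, if_neg h2]
          rw [h1] at hlt
          exact hvU a₂ (key a₂ ha₂ h2) hlt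
      · by_cases h2 : a₂ = t
        · rw [if_neg h1, if_pos h2]
          rw [h2] at hlt
          exact hvL a₁ (key a₁ ha₁ h1) hlt
        · rw [if_neg h1, if_neg h2]
          exact hf a₁ (key a₁ ha₁ h1) a₂ (key a₂ ha₂ h2) hlt
  by_cases hb : ∃ b ∈ A₁, f₁ b = t
  · exact ⟨A₁, f₁, h₁strict, h₁sub, h₁agree, h₁mem, hb⟩
  · obtain ⟨z, hz⟩ := hIPP A₁
    have hzA : z ∉ A₁ := fun h => (hz z h).1 (le_refl z)
    have key : ∀ a ∈ insert z A₁, a ≠ z → a ∈ A₁ :=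
      fun a ha hne => (Finset.mem_insert.1 ha).resolve_left hne
    refine ⟨insert z A₁, Function.update f₁ z t, ?_,
      h₁sub.trans (Finset.subset_insert _ _),
      fun a ha => (Function.update_of_ne (ne_of_mem_of_not_mem (h₁sub ha) hzA) _ _).trans
        (h₁agree a ha),
      Finset.mem_insert_of_mem h₁mem,
      ⟨z, Finset.mem_insert_self _ _, Function.update_self _ _ _⟩⟩
    intro a₁ ha₁ a₂ ha₂ hlt
    by_cases h1 : a₁ = z
    · by_cases h2 : a₂ = z
      · rw [h1, h2] at hlt
        exact absurd hlt (lt_irrefl z)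
      · rw [h1] at hlt
        exact absurd hlt.le (hz a₂ (key a₂ ha₂ h2)).1
    · by_cases h2 : a₂ = z
      · rw [h2] at hlt
        exact absurd hlt.le (hz a₁ (key a₁ ha₁ h1)).2
      · rw [Function.update_of_ne h1, Function.update_of_ne h2]
        exact h₁strict a₁ (key a₁ ha₁ h1) a₂ (key a₂ ha₂ h2) hlt

private lemma step_MB (hIH : IHHomogeneous P)
    (hIPP : ∀ A : Finset P, ∃ z : P, ∀ a ∈ A, Incomp z a)
    (A : Finset P) (f : P → P)
    (hf : ∀ a₁ ∈ A, ∀ a₂ ∈ A, a₁ < a₂ → f a₁ < f a₂)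
    (hinj : Set.InjOn f ↑A) (t : P) :
    ∃ (A' : Finset P) (f' : P → P),
      ((∀ a₁ ∈ A', ∀ a₂ ∈ A', a₁ < a₂ → f' a₁ < f' a₂) ∧ Set.InjOn f' ↑A') ∧
      A ⊆ A' ∧ (∀ a ∈ A, f' a = f a) ∧ t ∈ A' ∧ ∃ b ∈ A', f' b = t := by
  classical
  obtain ⟨A₁, f₁, h₁strict, h₁inj, h₁sub, h₁agree, h₁mem⟩ :
      ∃ (A₁ : Finset P) (f₁ : P → P), (∀ a₁ ∈ A₁, ∀ a₂ ∈ A₁, a₁ < a₂ → f₁ a₁ < f₁ a₂) ∧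
        Set.InjOn f₁ ↑A₁ ∧ A ⊆ A₁ ∧ (∀ a ∈ A, f₁ a = f a) ∧ t ∈ A₁ := by
    by_cases ht : t ∈ A
    · exact ⟨A, f, hf, hinj, subset_rfl, fun a _ => rfl, ht⟩
    · obtain ⟨v, hv, hvL, hvU⟩ := forth hIH hIPP A f hf t (A.image f)
      have key : ∀ a ∈ insert t A, a ≠ t → a ∈ A :=
        fun a ha hne => (Finset.mem_insert.1 ha).resolve_left hne
      have hupd : ∀ a ∈ A, Function.update f t v a = f a :=
        fun a ha => Function.update_of_ne (ne_of_mem_of_not_mem ha ht) _ _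
      refine ⟨insert t A, Function.update f t v, ?_, ?_, Finset.subset_insert _ _,
        hupd, Finset.mem_insert_self _ _⟩
      · intro a₁ ha₁ a₂ ha₂ hlt
        by_cases h1 : a₁ = t
        · by_cases h2 : a₂ = t
          · rw [h1, h2] at hlt
            exact absurd hlt (lt_irrefl t)
          · rw [h1, Function.update_self, Function.update_of_ne h2]
            rw [h1] at hlt
            exact hvU a₂ (key a₂ ha₂ h2) hlt
        · by_cases h2 : a₂ = t
          · rw [h2, Function.update_self, Function.update_of_ne h1]
            rw [h2] at hlt
            exact hvL a₁ (key a₁ ha₁ h1) hlt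
          · rw [Function.update_of_ne h1, Function.update_of_ne h2]
            exact hf a₁ (key a₁ ha₁ h1) a₂ (key a₂ ha₂ h2) hlt
      · intro x hx y hy heq
        simp only [Finset.coe_insert, Set.mem_insert_iff, Finset.mem_coe] at hx hy
        by_cases h1 : x = t
        · by_cases h2 : y = t
          · rw [h1, h2]
          · have hy' : y ∈ A := hy.resolve_left h2
            rw [h1, Function.update_self, Function.update_of_ne h2] at heq
            exact absurd (heq ▸ Finset.mem_image_of_mem f hy') hv
        · by_cases h2 : y = t
          · have hx' : x ∈ A := hx.resolve_left h1
            rw [h2, Function.update_self, Function.update_of_ne h1] at heq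
            exact absurd (heq ▸ Finset.mem_image_of_mem f hx') hv
          · rw [Function.update_of_ne h1, Function.update_of_ne h2] at heq
            exact hinj (hx.resolve_left h1) (hy.resolve_left h2) heq
  by_cases hb : ∃ b ∈ A₁, f₁ b = t
  · exact ⟨A₁, f₁, ⟨h₁strict, h₁inj⟩, h₁sub, h₁agree, h₁mem, hb⟩
  · obtain ⟨z, hz⟩ := hIPP A₁
    have hzA : z ∉ A₁ := fun h => (hz z h).1 (le_refl z)
    have key : ∀ a ∈ insert z A₁, a ≠ z → a ∈ A₁ :=
      fun a ha hne => (Finset.mem_insert.1 ha).resolve_left hne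
    have hupd : ∀ a ∈ A₁, Function.update f₁ z t a = f₁ a :=
      fun a ha => Function.update_of_ne (ne_of_mem_of_not_mem ha hzA) _ _
    refine ⟨insert z A₁, Function.update f₁ z t, ⟨?_, ?_⟩,
      h₁sub.trans (Finset.subset_insert _ _),
      fun a ha => (hupd a (h₁sub ha)).trans (h₁agree a ha),
      Finset.mem_insert_of_mem h₁mem,
      ⟨z, Finset.mem_insert_self _ _, Function.update_self _ _ _⟩⟩
    · intro a₁ ha₁ a₂ ha₂ hlt
      by_cases h1 : a₁ = z
      · by_cases h2 : a₂ = z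
        · rw [h1, h2] at hlt
          exact absurd hlt (lt_irrefl z)
        · rw [h1] at hlt
          exact absurd hlt.le (hz a₂ (key a₂ ha₂ h2)).1
      · by_cases h2 : a₂ = z
        · rw [h2] at hlt
          exact absurd hlt.le (hz a₁ (key a₁ ha₁ h1)).2
        · rw [Function.update_of_ne h1, Function.update_of_ne h2]
          exact h₁strict a₁ (key a₁ ha₁ h1) a₂ (key a₂ ha₂ h2) hlt
    · intro x hx y hy heq
      simp only [Finset.coe_insert, Set.mem_insert_iff, Finset.mem_coe] at hx hy
      by_cases h1 : x = z
      · by_cases h2 : y = z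
        · rw [h1, h2]
        · have hy' : y ∈ A₁ := hy.resolve_left h2
          rw [h1, Function.update_self, Function.update_of_ne h2] at heq
          exact absurd ⟨y, hy', heq.symm⟩ hb
      · by_cases h2 : y = z
        · have hx' : x ∈ A₁ := hx.resolve_left h1
          rw [h2, Function.update_self, Function.update_of_ne h1] at heq
          exact absurd ⟨x, hx', heq⟩ hb
        · rw [Function.update_of_ne h1, Function.update_of_ne h2] at heq
          exact h₁inj (hx.resolve_left h1) (hy.resolve_left h2) heq



private lemma assemble [Countable P] (hP : Nonempty P)
    (Inv : Finset P → (P → P) → Prop)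
    (hmono : ∀ A f, Inv A f → ∀ a₁ ∈ A, ∀ a₂ ∈ A, a₁ < a₂ → f a₁ < f a₂)
    (hstep : ∀ A f, Inv A f → ∀ t : P, ∃ A' f', Inv A' f' ∧ A ⊆ A' ∧
      (∀ a ∈ A, f' a = f a) ∧ t ∈ A' ∧ ∃ b ∈ A', f' b = t)
    (A₀ : Finset P) (f₀ : P → P) (h₀ : Inv A₀ f₀) :
    ∃ g : P → P, StrictMono g ∧ Function.Surjective g ∧ (∀ a ∈ A₀, g a = f₀ a) ∧
      ((∀ A f, Inv A f → Set.InjOn f ↑A) → Function.Injective g) := by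
  classical
  obtain ⟨e, he⟩ := exists_surjective_nat P
  let T := {s : Finset P × (P → P) // Inv s.1 s.2}
  have step : ∀ (n : ℕ) (s : T), ∃ s' : T, s.1.1 ⊆ s'.1.1 ∧
      (∀ a ∈ s.1.1, s'.1.2 a = s.1.2 a) ∧ e n ∈ s'.1.1 ∧
      ∃ b ∈ s'.1.1, s'.1.2 b = e n := by
    intro n s
    obtain ⟨A', f', h1, h2, h3, h4, h5⟩ := hstep s.1.1 s.1.2 s.2 (e n)
    exact ⟨⟨(A', f'), h1⟩, h2, h3, h4, h5⟩
  let next : ℕ → T → T := fun n s => (step n s).choose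
  let S : ℕ → T := fun n => Nat.rec ⟨(A₀, f₀), h₀⟩ (fun k s => next k s) n
  have hSsucc : ∀ n, S (n + 1) = next n (S n) := fun n => rfl
  have hsub : ∀ n, (S n).1.1 ⊆ (S (n + 1)).1.1 := fun n => (step n (S n)).choose_spec.1
  have hagree : ∀ n, ∀ a ∈ (S n).1.1, (S (n + 1)).1.2 a = (S n).1.2 a :=
    fun n => (step n (S n)).choose_spec.2.1
  have hmem : ∀ n, e n ∈ (S (n + 1)).1.1 := fun n => (step n (S n)).choose_spec.2.2.1
  have hsur : ∀ n, ∃ b ∈ (S (n + 1)).1.1, (S (n + 1)).1.2 b = e n :=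
    fun n => (step n (S n)).choose_spec.2.2.2
  have hsub' : ∀ {m n : ℕ}, m ≤ n → (S m).1.1 ⊆ (S n).1.1 := by
    intro m n h
    induction n, h using Nat.le_induction with
    | base => exact subset_rfl
    | succ n hmn ih => exact ih.trans (hsub n)
  have hagree' : ∀ {m n : ℕ}, m ≤ n → ∀ a ∈ (S m).1.1, (S n).1.2 a = (S m).1.2 a := by
    intro m n h
    induction n, h using Nat.le_induction with
    | base => intro a _; rfl
    | succ n hmn ih => intro a ha; rw [hagree n a (hsub' hmn ha), ih a ha]
  have hex : ∀ x : P, ∃ n, x ∈ (S n).1.1 := by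
    intro x
    obtain ⟨n, rfl⟩ := he x
    exact ⟨n + 1, hmem n⟩
  let N : P → ℕ := fun x => (hex x).choose
  have hN : ∀ x, x ∈ (S (N x)).1.1 := fun x => (hex x).choose_spec
  let g : P → P := fun x => (S (N x)).1.2 x
  have hg : ∀ x n, x ∈ (S n).1.1 → g x = (S n).1.2 x := by
    intro x n hx
    rcases le_total (N x) n with h | h
    · exact (hagree' h x (hN x)).symm
    · exact hagree' h x hx
  have hgs : StrictMono g := by
    intro x y hxy
    have hx := hsub' (le_max_left (N x) (N y)) (hN x)
    have hy := hsub' (le_max_right (N x) (N y)) (hN y)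
    rw [hg x _ hx, hg y _ hy]
    exact hmono _ _ (S (max (N x) (N y))).2 x hx y hy hxy
  have hgsur : Function.Surjective g := by
    intro t
    obtain ⟨n, rfl⟩ := he t
    obtain ⟨b, hb, hbe⟩ := hsur n
    refine ⟨b, ?_⟩
    rw [hg b (n + 1) hb]
    exact hbe
  refine ⟨g, hgs, hgsur, ?_, ?_⟩
  · intro a ha
    exact hg a 0 ha
  · intro hinj x y hxy
    have hx := hsub' (le_max_left (N x) (N y)) (hN x)
    have hy := hsub' (le_max_right (N x) (N y)) (hN y)
    rw [hg x _ hx, hg y _ hy] at hxy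
    exact hinj _ _ (S (max (N x) (N y))).2 hx hy hxy

end Aux

/-- A countable IH-homogeneous poset with the incomparable point property
(every finite subset has a point incomparable to all its members) is HE-homogeneous
and MB-homogeneous. -/
theorem IH_IPP_implies_HE_MB (P : Type*) [PartialOrder P] [Countable P]
    (hIH : IHHomogeneous P)
    (hIPP : ∀ A : Finset P, ∃ z : P, ∀ a ∈ A, Incomp z a) :
    HEHomogeneous P ∧ MBHomogeneous P := by
  classical
  have hP : Nonempty P := (hIPP ∅).elim (fun z _ => ⟨z⟩)
  constructor
  · intro A f hf
    obtain ⟨g, h1, h2, h3, _⟩ := assemble hP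
      (fun A f => ∀ a₁ ∈ A, ∀ a₂ ∈ A, a₁ < a₂ → f a₁ < f a₂)
      (fun _ _ h => h)
      (fun A f h t => step_HE hIH hIPP A f h t)
      A f hf
    exact ⟨g, h1, h2, h3⟩
  · intro A f hinj hf
    obtain ⟨g, h1, h2, h3, h4⟩ := assemble hP
      (fun A f => (∀ a₁ ∈ A, ∀ a₂ ∈ A, a₁ < a₂ → f a₁ < f a₂) ∧ Set.InjOn f ↑A)
      (fun _ _ h => h.1)
      (fun A f h t => by
        obtain ⟨A', f', hi, hs, hagree, hm, hb⟩ := step_MB hIH hIPP A f h.1 h.2 t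
        exact ⟨A', f', hi, hs, hagree, hm, hb⟩)
      A f ⟨hf, hinj⟩
    exact ⟨g, h1, ⟨h4 (fun _ _ h => h.2), h2⟩, h3⟩
end

section
/- Let X be a linear order and f : X → X a ≤-preserving map (x ≤ y → f x ≤ f y). Define x ~ y iff there exist k, l, m ∈ ℕ with f^[k] x ≤ f^[l] y and f^[l] y ≤ f^[m] x, where f^[n] denotes the n-th iterate of f. Then ~ is an equivalence relation on X, and each of its equivalence classes is convex: if x ~ y, x ≤ z and z ≤ y, then x ~ z. -/
/-- The orbital relation of a ≤-preserving map `f` on a linear order: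
`x ~ y` iff `f^[k] x ≤ f^[l] y ≤ f^[m] x` for some `k, l, m ∈ ℕ`. -/
def OrbRel {X : Type*} [LinearOrder X] (f : X → X) (x y : X) : Prop :=
  ∃ k l m : ℕ, f^[k] x ≤ f^[l] y ∧ f^[l] y ≤ f^[m] x

/-- For a ≤-preserving map `f` of a linear order `X`, the orbital relation is an
equivalence relation whose classes are convex. -/
theorem orbRel_equivalence_convex {X : Type*} [LinearOrder X] (f : X → X)
    (hf : Monotone f) :
    Equivalence (OrbRel f) ∧
      ∀ x y z : X, OrbRel f x y → x ≤ z → z ≤ y → OrbRel f x z := by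
  have shift : ∀ {i j n : ℕ} {x y : X}, f^[i] x ≤ f^[j] y → f^[n + i] x ≤ f^[n + j] y := by
    intro i j n x y h
    simpa [Function.iterate_add_apply] using hf.iterate n h
  constructor
  · constructor
    · intro x; exact ⟨0, 0, 0, le_refl x, le_refl x⟩
    · rintro x y ⟨k, l, m, h1, h2⟩
      set b := max k m with hb
      refine ⟨(b - m) + l, b, (b - k) + l, ?_, ?_⟩
      · have := shift (n := b - m) h2
        rwa [Nat.sub_add_cancel (le_max_right k m)] at this
      · have := shift (n := b - k) h1
        rwa [Nat.sub_add_cancel (le_max_left k m)] at this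
    · rintro x y z ⟨k, l, m, h1, h2⟩ ⟨p, q, r, h3, h4⟩
      refine ⟨(p + r) + k, (l + r) + q, (2 * r) + m, ?_, ?_⟩
      · calc f^[(p + r) + k] x ≤ f^[(p + r) + l] y := shift h1
          _ = f^[(l + r) + p] y := by ring_nf
          _ ≤ f^[(l + r) + q] z := shift h3
      · calc f^[(l + r) + q] z ≤ f^[(l + r) + r] y := shift h4
          _ = f^[(2 * r) + l] y := by ring_nf
          _ ≤ f^[(2 * r) + m] x := shift h2
  · rintro x y z ⟨k, l, m, h1, h2⟩ hxz hzy
    exact ⟨l, l, m, (hf.iterate l) hxz, le_trans ((hf.iterate l) hzy) h2⟩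
end
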